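/- Let s be a real number with 0 < |s| < 1 and let T be a tree with maximum degree Δ(T) = 3 that contains the starlike tree T_{1,4,4} as a subgraph. Then ρ(M_T(s)) > (1 + |s|)². -/

import Mathlib

open Filter Topology

/-- The deformed Laplacian matrix `M_G(s) = I - s·A + s²·(D - I)` of a finite simple graph. -/
noncomputable def defLap {V : Type*} [Fintype V] [DecidableEq V] (G : SimpleGraph V) (s : ℝ) :
    Matrix V V ℝ :=
  letI := Classical.decRel G.Adj
  (1 : Matrix V V ℝ) - s • (G.adjMatrix ℝ) +
    s ^ 2 • (Matrix.diagonal (fun v => (G.degree v : ℝ)) - 1)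

/-- The largest (real) eigenvalue of a matrix. -/
noncomputable def lamMax {V : Type*} [Fintype V] (M : Matrix V V ℝ) : ℝ :=
  sSup {μ : ℝ | ∃ v : V → ℝ, v ≠ 0 ∧ M.mulVec v = μ • v}

/-- The spectral radius of a real matrix: the supremum of the absolute values of its
(real) eigenvalues. -/
noncomputable def specRad {V : Type*} [Fintype V] (M : Matrix V V ℝ) : ℝ :=
  sSup {x : ℝ | ∃ μ : ℝ, (∃ v : V → ℝ, v ≠ 0 ∧ M.mulVec v = μ • v) ∧ x = |μ|}

/-- The maximum degree of a finite simple graph. -/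
noncomputable def maxDeg {V : Type*} [Fintype V] (G : SimpleGraph V) : ℕ :=
  letI := Classical.decRel G.Adj
  G.maxDegree

/-- The starlike tree `T_{1,n,n}`: vertex `0` is the center, vertex `1` is a pendant vertex,
vertices `2,…,n+1` and `n+2,…,2n+1` form two pendant paths on `n` vertices each. -/
def T1nn (n : ℕ) : SimpleGraph (Fin (2 * n + 2)) :=
  SimpleGraph.fromRel (fun i j =>
    ((i : ℕ) = 0 ∧ (j : ℕ) = 1) ∨
    ((i : ℕ) = 0 ∧ (j : ℕ) = 2) ∨
    ((i : ℕ) = 0 ∧ (j : ℕ) = n + 2) ∨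
    (2 ≤ (i : ℕ) ∧ (i : ℕ) < n + 1 ∧ (j : ℕ) = (i : ℕ) + 1) ∨
    (n + 2 ≤ (i : ℕ) ∧ (i : ℕ) < 2 * n + 1 ∧ (j : ℕ) = (i : ℕ) + 1))

/-! ### Auxiliary machinery -/

lemma eig_bdd {V : Type*} [Fintype V] (M : Matrix V V ℝ) :
    BddAbove {μ : ℝ | ∃ v : V → ℝ, v ≠ 0 ∧ M.mulVec v = μ • v} := by
  refine ⟨∑ p, ∑ q, |M p q|, ?_⟩
  rintro μ ⟨v, hv, hMv⟩
  obtain ⟨k, hk⟩ := Function.ne_iff.mp hv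
  have : Nonempty V := ⟨k⟩
  obtain ⟨i, -, hi⟩ := Finset.exists_max_image Finset.univ (fun j => |v j|) ⟨k, Finset.mem_univ k⟩
  have hvi : 0 < |v i| := lt_of_lt_of_le (abs_pos.mpr hk) (hi k (Finset.mem_univ k))
  have hrow : ∑ j, M i j * v j = μ * v i := by
    have := congrFun hMv i
    simpa [Matrix.mulVec, dotProduct] using this
  have h1 : |μ| * |v i| ≤ (∑ j, |M i j|) * |v i| := by
    rw [← abs_mul, ← hrow]
    calc |∑ j, M i j * v j| ≤ ∑ j, |M i j * v j| := Finset.abs_sum_le_sum_abs _ _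
      _ ≤ ∑ j, |M i j| * |v i| := by
          refine Finset.sum_le_sum fun j _ => ?_
          rw [abs_mul]
          exact mul_le_mul_of_nonneg_left (hi j (Finset.mem_univ j)) (abs_nonneg _)
      _ = (∑ j, |M i j|) * |v i| := by rw [Finset.sum_mul]
  have h2 : |μ| ≤ ∑ j, |M i j| := le_of_mul_le_mul_right (by linarith) hvi
  calc μ ≤ |μ| := le_abs_self μ
    _ ≤ ∑ j, |M i j| := h2
    _ ≤ ∑ p, ∑ q, |M p q| :=
      Finset.single_le_sum (f := fun p => ∑ q, |M p q|)
        (fun p _ => Finset.sum_nonneg fun q _ => abs_nonneg _) (Finset.mem_univ i)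

open Matrix in
lemma rayleigh_le_lamMax {V : Type*} [Fintype V] [DecidableEq V]
    (M : Matrix V V ℝ) (hM : M.IsHermitian) {x : V → ℝ} (hx : x ≠ 0) :
    x ⬝ᵥ (M *ᵥ x) ≤ lamMax M * (x ⬝ᵥ x) := by
  obtain ⟨k, hk⟩ := Function.ne_iff.mp hx
  have : Nonempty V := ⟨k⟩
  set b := hM.eigenvectorBasis with hb
  set lam := hM.eigenvalues with hlam
  obtain ⟨i₀, -, hi₀⟩ := Finset.exists_max_image Finset.univ lam ⟨k, Finset.mem_univ k⟩
  have hmem : lam i₀ ∈ {μ : ℝ | ∃ v : V → ℝ, v ≠ 0 ∧ M.mulVec v = μ • v} := by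
    refine ⟨⇑(b i₀), ?_, ?_⟩
    · intro h0
      have h1 : ‖b i₀‖ = 1 := b.orthonormal.1 i₀
      have : (b i₀ : EuclideanSpace ℝ V) = 0 := by
        ext j; exact congrFun h0 j
      rw [this, norm_zero] at h1; norm_num at h1
    · exact hM.mulVec_eigenvectorBasis i₀
  have hμle : lam i₀ ≤ lamMax M := le_csSup (eig_bdd M) hmem
  set X : EuclideanSpace ℝ V := (WithLp.equiv 2 (V → ℝ)).symm x with hX
  have hTb : ∀ i, Matrix.toEuclideanLin M (b i) = lam i • b i := by
    intro i
    have h1 := hM.mulVec_eigenvectorBasis i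
    apply (WithLp.equiv 2 (V → ℝ)).injective
    ext j
    simpa using congrFun h1 j
  have hsym : (Matrix.toEuclideanLin M).IsSymmetric :=
    Matrix.isHermitian_iff_isSymmetric.mp hM
  have hexp : x ⬝ᵥ (M *ᵥ x) = (inner ℝ X (Matrix.toEuclideanLin M X) : ℝ) := by
    rw [Matrix.toEuclideanLin_apply]
    simp [PiLp.inner_apply, dotProduct, Matrix.mulVec, hX,
      PiLp.toLp_apply, mul_comm]
  have hxx : x ⬝ᵥ x = (inner ℝ X X : ℝ) := by
    rw [PiLp.inner_apply]
    simp [dotProduct, hX, PiLp.toLp_apply, sq]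
  have key : (inner ℝ X (Matrix.toEuclideanLin M X) : ℝ) = ∑ i, lam i * (inner ℝ (b i) X : ℝ) ^ 2 := by
    rw [← b.sum_inner_mul_inner X (Matrix.toEuclideanLin M X)]
    refine Finset.sum_congr rfl fun i _ => ?_
    rw [← hsym (b i) X, hTb i, real_inner_smul_left, real_inner_comm X (b i)]
    ring
  have par : (inner ℝ X X : ℝ) = ∑ i, (inner ℝ (b i) X : ℝ) ^ 2 := by
    rw [← b.sum_inner_mul_inner X X]
    refine Finset.sum_congr rfl fun i _ => ?_
    rw [real_inner_comm X (b i)]; ring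
  have hle : ∑ i, lam i * (inner ℝ (b i) X : ℝ) ^ 2 ≤ lam i₀ * ∑ i, (inner ℝ (b i) X : ℝ) ^ 2 := by
    rw [Finset.mul_sum]
    exact Finset.sum_le_sum fun i _ =>
      mul_le_mul_of_nonneg_right (hi₀ i (Finset.mem_univ i)) (sq_nonneg _)
  have hxx0 : (0:ℝ) ≤ (inner ℝ X X : ℝ) := real_inner_self_nonneg
  calc x ⬝ᵥ (M *ᵥ x) = ∑ i, lam i * (inner ℝ (b i) X : ℝ) ^ 2 := by rw [hexp, key]
    _ ≤ lam i₀ * (inner ℝ X X : ℝ) := by rw [par]; exact hle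
    _ ≤ lamMax M * (inner ℝ X X : ℝ) := mul_le_mul_of_nonneg_right hμle hxx0
    _ = lamMax M * (x ⬝ᵥ x) := by rw [hxx]

instance T1nnDecAdj (n : ℕ) : DecidableRel (T1nn n).Adj := fun a b => by
  unfold T1nn
  rw [SimpleGraph.fromRel_adj]
  infer_instance

/-- explicit boolean adjacency of `T1nn 4` on `Fin 10` -/
def adjB (i j : Fin 10) : Bool :=
  (i.val, j.val) ∈ [(0,1),(1,0),(0,2),(2,0),(0,6),(6,0),(2,3),(3,2),(3,4),(4,3),
    (4,5),(5,4),(6,7),(7,6),(7,8),(8,7),(8,9),(9,8)]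

lemma adjB_iff (i j : Fin 10) : (T1nn 4).Adj i j ↔ adjB i j := by
  revert i j; decide

/-- the test vector values -/
noncomputable def yv : Fin 10 → ℝ := ![20,10,16,12,8,4,16,12,8,4]

/-- parity of the distance to the center -/
def pv : Fin 10 → ℕ := ![0,1,1,0,1,0,1,0,1,0]

lemma adjB_parity : ∀ i j : Fin 10, adjB i j = true → pv i + pv j = 1 := by decide

open SimpleGraph in
def wTo : (i : Fin (2 * 4 + 2)) → (T1nn 4).Walk i 0 := fun i =>
  match i with
  | 0 => .nil
  | 1 => Walk.cons (show (T1nn 4).Adj 1 0 by decide) Walk.nil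
  | 2 => Walk.cons (show (T1nn 4).Adj 2 0 by decide) Walk.nil
  | 3 => Walk.cons (show (T1nn 4).Adj 3 2 by decide)
          (Walk.cons (show (T1nn 4).Adj 2 0 by decide) Walk.nil)
  | 4 => Walk.cons (show (T1nn 4).Adj 4 3 by decide)
          (Walk.cons (show (T1nn 4).Adj 3 2 by decide)
          (Walk.cons (show (T1nn 4).Adj 2 0 by decide) Walk.nil))
  | 5 => Walk.cons (show (T1nn 4).Adj 5 4 by decide)
          (Walk.cons (show (T1nn 4).Adj 4 3 by decide)
          (Walk.cons (show (T1nn 4).Adj 3 2 by decide)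
          (Walk.cons (show (T1nn 4).Adj 2 0 by decide) Walk.nil)))
  | 6 => Walk.cons (show (T1nn 4).Adj 6 0 by decide) Walk.nil
  | 7 => Walk.cons (show (T1nn 4).Adj 7 6 by decide)
          (Walk.cons (show (T1nn 4).Adj 6 0 by decide) Walk.nil)
  | 8 => Walk.cons (show (T1nn 4).Adj 8 7 by decide)
          (Walk.cons (show (T1nn 4).Adj 7 6 by decide)
          (Walk.cons (show (T1nn 4).Adj 6 0 by decide) Walk.nil))
  | 9 => Walk.cons (show (T1nn 4).Adj 9 8 by decide)
          (Walk.cons (show (T1nn 4).Adj 8 7 by decide)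
          (Walk.cons (show (T1nn 4).Adj 7 6 by decide)
          (Walk.cons (show (T1nn 4).Adj 6 0 by decide) Walk.nil)))

open SimpleGraph in
lemma adj_of_adj {V : Type*} [DecidableEq V] (T : SimpleGraph V) (hT : T.IsTree)
    (f : Fin (2 * 4 + 2) ↪ V) (hf : ∀ a b, (T1nn 4).Adj a b → T.Adj (f a) (f b))
    {i j : Fin (2 * 4 + 2)} (h : T.Adj (f i) (f j)) : (T1nn 4).Adj i j := by
  by_contra hH
  let φ : (T1nn 4) →g T := ⟨f, fun {a b} hab => hf a b hab⟩
  let w : (T1nn 4).Walk i j := (wTo i).append (wTo j).reverse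
  have huniq : (Path.singleton h) = ((w.map φ).toPath) :=
    isAcyclic_iff_path_unique.mp hT.2 (Path.singleton h) ((w.map φ).toPath)
  have hmem : s(f i, f j) ∈ ((Path.singleton h : T.Path (f i) (f j)) : T.Walk (f i) (f j)).edges := by
    simp [Path.singleton]
  rw [huniq] at hmem
  have hmem2 : s(f i, f j) ∈ (w.map φ).edges :=
    SimpleGraph.Walk.edges_toPath_subset _ hmem
  rw [SimpleGraph.Walk.edges_map] at hmem2
  obtain ⟨e, he, heq⟩ := List.mem_map.mp hmem2
  have heH : e ∈ (T1nn 4).edgeSet := w.edges_subset_edgeSet he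
  induction e with
  | _ a b =>
    rw [Sym2.map_pair_eq, Sym2.eq_iff] at heq
    have hab : (T1nn 4).Adj a b := heH
    rcases heq with ⟨h1, h2⟩ | ⟨h1, h2⟩
    · exact hH (f.injective h1 ▸ f.injective h2 ▸ hab)
    · exact hH (f.injective h2 ▸ f.injective h1 ▸ hab.symm)

set_option maxHeartbeats 1000000 in
lemma sum_eval (s t : ℝ) (D : Fin 10 → ℝ) :
    ∑ i : Fin 10, ∑ j : Fin 10,
      (if i = j then (yv i)^2 * (1 + s^2 * (D i - 1)) else if adjB i j then t * (yv i * yv j) else 0)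
    = (∑ i : Fin 10, (yv i)^2 * (1 + s^2 * (D i - 1))) + t * 2960 := by
  simp only [Fin.sum_univ_succ, Fin.sum_univ_zero]
  norm_num [yv, adjB, Fin.ext_iff, Fin.val_succ]
  simp [Matrix.cons_val]
  ring

set_option maxHeartbeats 2000000 in
open Matrix in
/-- for a real `s` with `0 < |s| < 1` and a tree `T` with maximum degree
`Δ(T) = 3` containing the starlike tree `T_{1,4,4}` as a subgraph,
one has `ρ(M_T(s)) > (1 + |s|)²`. -/
theorem stmt12 {V : Type*} [Fintype V] [DecidableEq V] (T : SimpleGraph V)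
    (hT : T.IsTree) (s : ℝ) (hs0 : 0 < |s|) (hs1 : |s| < 1) (hdeg : maxDeg T = 3)
    (hsub : ∃ f : Fin (2 * 4 + 2) ↪ V, ∀ a b, (T1nn 4).Adj a b → T.Adj (f a) (f b)) :
    (1 + |s|) ^ 2 < lamMax (defLap T s) := by
  letI instT : DecidableRel T.Adj := Classical.decRel T.Adj
  obtain ⟨f, hf⟩ := hsub
  set t : ℝ := |s| with ht
  have hsne : s ≠ 0 := abs_pos.mp hs0
  set σ : ℝ := if 0 < s then -1 else 1 with hσ
  have hσ2 : σ ^ 2 = 1 := by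
    by_cases h : 0 < s <;> simp [hσ, h]
  have hσs : -(s * σ) = t := by
    by_cases h : 0 < s
    · simp [hσ, h, ht, abs_of_pos h]
    · have h' : s < 0 := lt_of_le_of_ne (not_lt.mp h) hsne
      simp [hσ, h, ht, abs_of_neg h']
  have hε2 : ∀ i : Fin 10, (σ ^ pv i) ^ 2 = 1 := by
    intro i
    rw [← pow_mul, mul_comm, pow_mul, hσ2, one_pow]
  -- the test vector
  set x : V → ℝ := Function.extend (⇑f) (fun i => σ ^ pv i * yv i) (fun _ => 0) with hxdef
  have hxfi : ∀ i : Fin 10, x (f i) = σ ^ pv i * yv i := fun i =>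
    f.injective.extend_apply _ _ i
  have hx0 : ∀ v : V, (∀ i, f i ≠ v) → x v = 0 := by
    intro v hv
    rw [hxdef]
    exact Function.extend_apply' _ _ _ (by rintro ⟨i, rfl⟩; exact hv i rfl)
  have hxne : x ≠ 0 := by
    intro h0
    have h1 := congrFun h0 (f 0)
    rw [hxfi 0] at h1
    norm_num [pv, yv] at h1
  -- degrees
  set D : Fin 10 → ℝ := fun i => (T.degree (f i) : ℝ) with hD
  have degBound : ∀ (s10 : Finset (Fin 10)) (u : Fin 10),
      (∀ i ∈ s10, (T1nn 4).Adj u i) → s10.card ≤ T.degree (f u) := by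
    intro s10 u h
    have hsub2 : s10.map f ⊆ T.neighborFinset (f u) := by
      intro v hv
      obtain ⟨i, hi, rfl⟩ := Finset.mem_map.mp hv
      rw [SimpleGraph.mem_neighborFinset]
      exact hf u i (h i hi)
    calc s10.card = (s10.map f).card := (Finset.card_map f).symm
      _ ≤ (T.neighborFinset (f u)).card := Finset.card_le_card hsub2
      _ = T.degree (f u) := rfl
  have hD0 : (3:ℝ) ≤ D 0 := by
    have h := degBound ({1,2,6} : Finset (Fin 10)) 0 (by decide)
    rw [show ({1,2,6} : Finset (Fin 10)).card = 3 by decide] at h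
    simp only [hD]
    exact_mod_cast h
  have hD2 : (2:ℝ) ≤ D 2 := by
    have h := degBound ({0,3} : Finset (Fin 10)) 2 (by decide)
    rw [show ({0,3} : Finset (Fin 10)).card = 2 by decide] at h
    simp only [hD]
    exact_mod_cast h
  have hD3 : (2:ℝ) ≤ D 3 := by
    have h := degBound ({2,4} : Finset (Fin 10)) 3 (by decide)
    rw [show ({2,4} : Finset (Fin 10)).card = 2 by decide] at h
    simp only [hD]
    exact_mod_cast h
  have hD4 : (2:ℝ) ≤ D 4 := by
    have h := degBound ({3,5} : Finset (Fin 10)) 4 (by decide)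
    rw [show ({3,5} : Finset (Fin 10)).card = 2 by decide] at h
    simp only [hD]
    exact_mod_cast h
  have hD6 : (2:ℝ) ≤ D 6 := by
    have h := degBound ({0,7} : Finset (Fin 10)) 6 (by decide)
    rw [show ({0,7} : Finset (Fin 10)).card = 2 by decide] at h
    simp only [hD]
    exact_mod_cast h
  have hD7 : (2:ℝ) ≤ D 7 := by
    have h := degBound ({6,8} : Finset (Fin 10)) 7 (by decide)
    rw [show ({6,8} : Finset (Fin 10)).card = 2 by decide] at h
    simp only [hD]
    exact_mod_cast h
  have hD8 : (2:ℝ) ≤ D 8 := by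
    have h := degBound ({7,9} : Finset (Fin 10)) 8 (by decide)
    rw [show ({7,9} : Finset (Fin 10)).card = 2 by decide] at h
    simp only [hD]
    exact_mod_cast h
  have hD1 : (1:ℝ) ≤ D 1 := by
    have h := degBound ({0} : Finset (Fin 10)) 1 (by decide)
    rw [show ({0} : Finset (Fin 10)).card = 1 by decide] at h
    simp only [hD]
    exact_mod_cast h
  have hD5 : (1:ℝ) ≤ D 5 := by
    have h := degBound ({4} : Finset (Fin 10)) 5 (by decide)
    rw [show ({4} : Finset (Fin 10)).card = 1 by decide] at h
    simp only [hD]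
    exact_mod_cast h
  have hD9 : (1:ℝ) ≤ D 9 := by
    have h := degBound ({8} : Finset (Fin 10)) 9 (by decide)
    rw [show ({8} : Finset (Fin 10)).card = 1 by decide] at h
    simp only [hD]
    exact_mod_cast h
  -- entries of the deformed Laplacian
  have hentry : ∀ u v : V, (defLap T s) u v =
      (if u = v then (1:ℝ) else 0) - s * (if T.Adj u v then 1 else 0) +
        s ^ 2 * ((if u = v then (T.degree u : ℝ) else 0) - (if u = v then 1 else 0)) := by
    intro u v
    simp [defLap, Matrix.one_apply, Matrix.diagonal_apply, Matrix.sub_apply, Matrix.add_apply,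
      Matrix.smul_apply, SimpleGraph.adjMatrix_apply, smul_eq_mul]
  -- restriction of sums to the image of f
  have hrestrict : ∀ (F : V → ℝ), (∀ v, (∀ i, f i ≠ v) → F v = 0) →
      ∑ v, F v = ∑ i : Fin 10, F (f i) := by
    intro F hF
    rw [← Finset.sum_map Finset.univ f F]
    symm
    apply Finset.sum_subset (Finset.subset_univ _)
    intro v _ hv
    exact hF v (fun i hfi => hv (Finset.mem_map.mpr ⟨i, Finset.mem_univ i, hfi⟩))
  -- the quadratic form
  have hQ : x ⬝ᵥ ((defLap T s) *ᵥ x) =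
      ∑ i : Fin 10, ∑ j : Fin 10, x (f i) * (defLap T s) (f i) (f j) * x (f j) := by
    calc x ⬝ᵥ ((defLap T s) *ᵥ x) = ∑ u, x u * ((defLap T s) *ᵥ x) u := rfl
      _ = ∑ i : Fin 10, x (f i) * ((defLap T s) *ᵥ x) (f i) :=
          hrestrict _ (fun v hv => by rw [hx0 v hv, zero_mul])
      _ = ∑ i : Fin 10, x (f i) * ∑ j : Fin 10, (defLap T s) (f i) (f j) * x (f j) := by
          refine Finset.sum_congr rfl fun i _ => ?_
          congr 1
          exact hrestrict _ (fun v hv => by rw [hx0 v hv, mul_zero])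
      _ = ∑ i : Fin 10, ∑ j : Fin 10, x (f i) * (defLap T s) (f i) (f j) * x (f j) := by
          refine Finset.sum_congr rfl fun i _ => ?_
          rw [Finset.mul_sum]
          exact Finset.sum_congr rfl fun j _ => (mul_assoc _ _ _).symm
  -- pairwise values
  have hpair : ∀ i j : Fin 10, x (f i) * (defLap T s) (f i) (f j) * x (f j) =
      (if i = j then (yv i)^2 * (1 + s^2 * (D i - 1))
        else if adjB i j then t * (yv i * yv j) else 0) := by
    intro i j
    rw [hentry, hxfi, hxfi]
    by_cases hij : i = j
    · subst hij
      rw [if_pos rfl, if_pos rfl, if_pos rfl, if_neg (T.loopless.irrefl (f i))]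
      have hDi : ((T.degree (f i) : ℝ)) = D i := rfl
      rw [hDi]
      linear_combination (yv i ^ 2 * (1 + s ^ 2 * (D i - 1))) * (hε2 i)
    · have hfij : f i ≠ f j := fun h => hij (f.injective h)
      rw [if_neg hfij, if_neg hfij, if_neg hij]
      by_cases hb : adjB i j
      · have hTadj : T.Adj (f i) (f j) := hf i j ((adjB_iff i j).mpr hb)
        rw [if_pos hTadj, if_pos hb]
        have hpp : pv i + pv j = 1 := adjB_parity i j hb
        calc (σ ^ pv i * yv i) * ((0 - s * 1) + s ^ 2 * (0 - 0)) * (σ ^ pv j * yv j)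
            = -(s * (σ ^ (pv i + pv j))) * (yv i * yv j) := by rw [pow_add]; ring
          _ = -(s * σ) * (yv i * yv j) := by rw [hpp, pow_one]
          _ = t * (yv i * yv j) := by rw [hσs]
      · have hnT : ¬ T.Adj (f i) (f j) :=
          fun h => hb ((adjB_iff i j).mp (adj_of_adj T hT f hf h))
        rw [if_neg hnT, if_neg hb]
        ring
  have hsum : x ⬝ᵥ ((defLap T s) *ᵥ x) =
      (∑ i : Fin 10, (yv i)^2 * (1 + s^2 * (D i - 1))) + t * 2960 := by
    rw [hQ, ← sum_eval s t D]
    exact Finset.sum_congr rfl fun i _ => Finset.sum_congr rfl fun j _ => hpair i j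
  -- the norm of x
  have hxx : x ⬝ᵥ x = 1460 := by
    have h1 : x ⬝ᵥ x = ∑ i : Fin 10, x (f i) * x (f i) :=
      hrestrict _ (fun v hv => by rw [hx0 v hv, zero_mul])
    have h2 : ∀ i : Fin 10, x (f i) * x (f i) = (yv i) ^ 2 := by
      intro i
      rw [hxfi]
      calc (σ ^ pv i * yv i) * (σ ^ pv i * yv i) = (σ ^ pv i) ^ 2 * (yv i)^2 := by ring
        _ = (yv i) ^ 2 := by rw [hε2 i, one_mul]
    rw [h1]
    rw [Finset.sum_congr rfl fun i _ => h2 i]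
    norm_num [yv, Fin.sum_univ_succ]
  -- Hermitian
  have hherm : (defLap T s).IsHermitian := by
    rw [Matrix.IsHermitian]
    ext u v
    rw [Matrix.conjTranspose_apply, star_trivial, hentry, hentry]
    by_cases h : u = v
    · subst h; rfl
    · simp [h, Ne.symm h, T.adj_comm v u]
  -- Rayleigh
  have hray := rayleigh_le_lamMax (defLap T s) hherm hxne
  rw [hsum, hxx] at hray
  -- final numeric estimate
  have hQlow : (1 + t) ^ 2 * 1460 <
      (∑ i : Fin 10, (yv i)^2 * (1 + s^2 * (D i - 1))) + t * 2960 := by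
    have hts : t ^ 2 = s ^ 2 := by rw [ht, sq_abs]
    have ht0 : 0 < t := hs0
    have key : ∀ i : Fin 10, (yv i)^2 * (1 + s^2 * (![3,1,2,2,2,1,2,2,2,1] i - 1))
        ≤ (yv i)^2 * (1 + s^2 * (D i - 1)) := by
      intro i
      have h : (![3,1,2,2,2,1,2,2,2,1] : Fin 10 → ℝ) i ≤ D i := by
        fin_cases i <;>
          simpa using (by assumption : _)
      nlinarith [mul_nonneg (mul_nonneg (sq_nonneg (yv i)) (sq_nonneg s)) (sub_nonneg.mpr h)]
    have hsum2 : ∑ i : Fin 10, (yv i)^2 * (1 + s^2 * (![3,1,2,2,2,1,2,2,2,1] i - 1))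
        ≤ ∑ i : Fin 10, (yv i)^2 * (1 + s^2 * (D i - 1)) :=
      Finset.sum_le_sum fun i _ => key i
    have hnum : ∑ i : Fin 10, (yv i)^2 * (1 + s^2 * ((![3,1,2,2,2,1,2,2,2,1] : Fin 10 → ℝ) i - 1))
        = 1460 + s^2 * 1728 := by
      simp [Fin.sum_univ_succ, yv]
      ring
    rw [hnum] at hsum2
    nlinarith [hsum2, ht0, hts]
  have hfin : (1 + t) ^ 2 * 1460 < lamMax (defLap T s) * 1460 := lt_of_lt_of_le hQlow hray
  nlinarith [hfin]
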